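/- Let S ⊆ ℝⁿ be a nonempty closed convex set and let g : ℝⁿ → ℝ be convex and differentiable. Let y ∈ ℝⁿ and x = Π_S(y) be the Euclidean projection of y onto S. If x - ε₀·∇g(x) ∈ S for some ε₀ > 0, then g(x) ≤ g(y). -/

import Mathlib

open InnerProductSpace

set_option maxHeartbeats 1000000

theorem constraint_value_le_at_projection {n : ℕ}
    (S : Set (EuclideanSpace ℝ (Fin n))) (hSne : S.Nonempty)
    (hScl : IsClosed S) (hSc : Convex ℝ S)
    (g : EuclideanSpace ℝ (Fin n) → ℝ)
    (g' : EuclideanSpace ℝ (Fin n) → EuclideanSpace ℝ (Fin n))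
    (hconv : ConvexOn ℝ Set.univ g)
    (hdiff : ∀ z, HasGradientAt g (g' z) z)
    (y x : EuclideanSpace ℝ (Fin n)) (hx : x ∈ S)
    (hproj : ∀ z ∈ S, ‖x - y‖ ≤ ‖z - y‖)
    (ε₀ : ℝ) (hε₀ : 0 < ε₀) (hmem : x - ε₀ • g' x ∈ S) :
    g x ≤ g y := by
  -- variational inequality
  have hinf : ‖y - x‖ = ⨅ w : S, ‖y - (w : EuclideanSpace ℝ (Fin n))‖ := by
    haveI : Nonempty S := ⟨⟨x, hx⟩⟩
    have hbdd : BddBelow (Set.range fun w : S => ‖y - (w : EuclideanSpace ℝ (Fin n))‖) := by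
      refine ⟨0, ?_⟩
      rintro _ ⟨w, rfl⟩
      exact norm_nonneg _
    refine le_antisymm (le_ciInf fun w => ?_) (ciInf_le hbdd ⟨x, hx⟩)
    rw [norm_sub_rev y x, norm_sub_rev y _]
    exact hproj w w.2
  have hvar := (norm_eq_iInf_iff_real_inner_le_zero hSc hx).mp hinf
  have hkey : (0 : ℝ) ≤ ⟪g' x, y - x⟫_ℝ := by
    have h := hvar _ hmem
    have : (x - ε₀ • g' x) - x = (-ε₀) • g' x := by
      rw [sub_sub_cancel_left, neg_smul]
    rw [this, real_inner_smul_right] at h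
    nlinarith [real_inner_comm (y - x) (g' x)]
  -- gradient inequality via 1-D restriction
  set φ : ℝ → ℝ := fun t => g (x + t • (y - x)) with hφ
  have hφconv : ConvexOn ℝ Set.univ φ := by
    have := hconv.comp_affineMap (AffineMap.lineMap x y : ℝ →ᵃ[ℝ] EuclideanSpace ℝ (Fin n))
    simp only [Set.preimage_univ] at this
    have heq : φ = g ∘ ⇑(AffineMap.lineMap x y : ℝ →ᵃ[ℝ] EuclideanSpace ℝ (Fin n)) := by
      funext t
      simp only [hφ, Function.comp_apply, AffineMap.lineMap_apply_module]
      congr 1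
      module
    rw [heq]
    exact this
  have hline : HasDerivAt (fun t : ℝ => x + t • (y - x)) (y - x) 0 := by
    have : HasDerivAt (fun t : ℝ => t • (y - x)) ((1 : ℝ) • (y - x)) 0 :=
      (hasDerivAt_id 0).smul_const (y - x)
    simpa using this.const_add x
  have hφderiv : HasDerivAt φ ⟪g' x, y - x⟫_ℝ 0 := by
    have hg : HasFDerivAt g (toDual ℝ _ (g' x)) x := (hdiff x).hasFDerivAt
    have h0 : x = x + (0 : ℝ) • (y - x) := by simp
    rw [h0] at hg
    have := hg.comp_hasDerivAt (0 : ℝ) hline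
    simp only [zero_smul, add_zero, toDual_apply_apply] at this
    exact this
  have hslope := hφconv.le_slope_of_hasDerivAt (Set.mem_univ 0) (Set.mem_univ 1)
    one_pos hφderiv
  have hφ0 : φ 0 = g x := by simp [hφ]
  have hφ1 : φ 1 = g y := by simp [hφ]
  rw [slope_def_field, hφ0, hφ1] at hslope
  rw [show (1:ℝ) - 0 = 1 by norm_num, div_one] at hslope
  linarith
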